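/- For the Type II outlier-corrupted affinity matrix W̃ and each j = 1, …, K, the value N_j w_j + w̃_j is a (standard) eigenvalue of the corrupted Laplacian L̃ with geometric multiplicity at least N_j − 1; that is, the kernel of L̃ − (N_j w_j + w̃_j)·I has dimension at least N_j − 1. -/

import Mathlib

/-- For the Type II outlier-corrupted affinity matrix `W̃` and each block `j`,
the value `n j * w j + w̃ j` is a (standard) eigenvalue of the corrupted Laplacian `L̃` with
geometric multiplicity at least `n j - 1`; that is, the kernel of
`L̃ - (n j * w j + w̃ j) • I` has dimension at least `n j - 1`. -/
theorem typeII_standard_eigenvalue_multiplicity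
    (K : ℕ) (hK : 1 ≤ K)
    (n : Fin K → ℕ) (hn : ∀ i, 2 ≤ n i)
    (w : Fin K → ℝ) (hw : ∀ i, 0 < w i)
    (N : ℕ) (hN : N = ∑ i, n i)
    (β : Fin N → Fin K)
    (hβ : ∀ m : Fin N,
      (∑ k ∈ Finset.univ.filter (fun k => k < β m), n k) ≤ m.val ∧
      m.val < (∑ k ∈ Finset.univ.filter (fun k => k < β m), n k) + n (β m))
    (W : Matrix (Fin N) (Fin N) ℝ)
    (hW : ∀ m p, W m p = if m ≠ p ∧ β m = β p then w (β m) else 0)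
    (wt : Fin K → ℝ) (hwt : ∀ j, 0 < wt j)
    (Wt : Matrix (Fin (N + 1)) (Fin (N + 1)) ℝ)
    (hWt1 : ∀ a b : Fin N, Wt a.castSucc b.castSucc = W a b)
    (hWt2 : ∀ a : Fin N, Wt (Fin.last N) a.castSucc = wt (β a))
    (hWt3 : ∀ a : Fin N, Wt a.castSucc (Fin.last N) = wt (β a))
    (hWt4 : Wt (Fin.last N) (Fin.last N) = 0)
    (Dt : Matrix (Fin (N + 1)) (Fin (N + 1)) ℝ)
    (hDt : Dt = Matrix.diagonal (fun m => ∑ q, Wt m q))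
    (Lt : Matrix (Fin (N + 1)) (Fin (N + 1)) ℝ)
    (hLt : Lt = Dt - Wt) :
    ∀ j : Fin K,
      n j - 1 ≤
        Module.finrank ℝ
          ↥(LinearMap.ker
            (Matrix.toLin'
              (Lt - ((n j : ℝ) * w j + wt j) •
                (1 : Matrix (Fin (N + 1)) (Fin (N + 1)) ℝ)))) := by
  intro j
  -- monotonicity of partial sums
  have hmono : ∀ i i' : Fin K, i < i' →
      (∑ k ∈ Finset.univ.filter (fun k => k < i), n k) + n i ≤
      ∑ k ∈ Finset.univ.filter (fun k => k < i'), n k := by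
    intro i i' hii
    have hnot : i ∉ Finset.univ.filter (fun k : Fin K => k < i) := by simp
    have hsub : insert i (Finset.univ.filter (fun k : Fin K => k < i)) ⊆
        Finset.univ.filter (fun k : Fin K => k < i') := by
      intro k hk
      simp only [Finset.mem_insert, Finset.mem_filter, Finset.mem_univ, true_and] at hk ⊢
      rcases hk with rfl | hk
      · exact hii
      · exact hk.trans hii
    calc (∑ k ∈ Finset.univ.filter (fun k => k < i), n k) + n i
        = ∑ k ∈ insert i (Finset.univ.filter (fun k => k < i)), n k := by
          rw [Finset.sum_insert hnot, add_comm]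
      _ ≤ _ := Finset.sum_le_sum_of_subset hsub
  have hNle : (∑ k ∈ Finset.univ.filter (fun k => k < j), n k) + n j ≤ N := by
    have hnot : j ∉ Finset.univ.filter (fun k : Fin K => k < j) := by simp
    calc (∑ k ∈ Finset.univ.filter (fun k => k < j), n k) + n j
        = ∑ k ∈ insert j (Finset.univ.filter (fun k => k < j)), n k := by
          rw [Finset.sum_insert hnot, add_comm]
      _ ≤ ∑ k, n k := Finset.sum_le_sum_of_subset (Finset.subset_univ _)
      _ = N := hN.symm
  -- characterization of the block
  have hβj : ∀ m : Fin N, β m = j ↔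
      (∑ k ∈ Finset.univ.filter (fun k => k < j), n k) ≤ m.val ∧
       m.val < (∑ k ∈ Finset.univ.filter (fun k => k < j), n k) + n j := by
    intro m
    constructor
    · intro h
      have hm := hβ m
      rw [h] at hm
      exact hm
    · intro h
      rcases lt_trichotomy (β m) j with hlt | heq | hgt
      · exact absurd ((hβ m).2.trans_le ((hmono _ _ hlt).trans h.1)) (lt_irrefl _)
      · exact heq
      · exact absurd (h.2.trans_le ((hmono _ _ hgt).trans (hβ m).1)) (lt_irrefl _)
  -- cardinality of the block
  have hcard : (Finset.univ.filter (fun m : Fin N => β m = j)).card = n j := by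
    have h1 : (Finset.univ.filter (fun m : Fin N => β m = j)).card =
        (Finset.Ico (∑ k ∈ Finset.univ.filter (fun k => k < j), n k)
          ((∑ k ∈ Finset.univ.filter (fun k => k < j), n k) + n j)).card := by
      apply Finset.card_nbij (fun m => m.val)
      · intro a ha
        have ha : β a = j := by simpa using ha
        exact Finset.mem_Ico.mpr ((hβj a).mp ha)
      · intro a _ b _ hab
        exact Fin.val_injective hab
      · intro x hx
        simp only [Finset.coe_Ico, Set.mem_Ico] at hx
        refine ⟨⟨x, lt_of_lt_of_le hx.2 hNle⟩, ?_, rfl⟩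
        simp only [Finset.coe_filter, Set.mem_setOf_eq, Finset.mem_univ, true_and]
        exact (hβj _).mpr hx
    rw [h1, Nat.card_Ico]
    omega
  -- row sums of Wt within the block
  have hrow : ∀ a : Fin N, β a = j →
      ∑ q, Wt a.castSucc q = ((n j : ℝ) - 1) * w j + wt j := by
    intro a ha
    rw [Fin.sum_univ_castSucc, hWt3, ha]
    congr 1
    calc ∑ b : Fin N, Wt a.castSucc b.castSucc
        = ∑ b : Fin N, (if a ≠ b ∧ β a = β b then w (β a) else 0) := by
          simp only [hWt1, hW]
      _ = ∑ b ∈ Finset.univ.filter (fun b => a ≠ b ∧ β a = β b), w (β a) :=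
          (Finset.sum_filter _ _).symm
      _ = ((Finset.univ.filter (fun b : Fin N => a ≠ b ∧ β a = β b)).card : ℝ) * w j := by
          rw [Finset.sum_const, ha, nsmul_eq_mul]
      _ = ((n j : ℝ) - 1) * w j := by
          congr 1
          have hfe : Finset.univ.filter (fun b : Fin N => a ≠ b ∧ β a = β b)
              = (Finset.univ.filter (fun m : Fin N => β m = j)).erase a := by
            ext b
            simp only [Finset.mem_filter, Finset.mem_univ, true_and, Finset.mem_erase, ha]
            constructor
            · rintro ⟨h1, h2⟩
              exact ⟨fun h => h1 h.symm, h2.symm⟩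
            · rintro ⟨h1, h2⟩
              exact ⟨fun h => h1 h.symm, h2.symm⟩
          have hmem : a ∈ Finset.univ.filter (fun m : Fin N => β m = j) := by
            simp [ha]
          rw [hfe, Finset.card_erase_of_mem hmem, hcard,
            Nat.cast_sub (le_trans one_le_two (hn j))]
          simp
  -- entries of the shifted Laplacian
  have hM : ∀ p q : Fin (N + 1),
      (Lt - ((n j : ℝ) * w j + wt j) • (1 : Matrix (Fin (N + 1)) (Fin (N + 1)) ℝ)) p q
        = (if p = q then (∑ r, Wt p r) - ((n j : ℝ) * w j + wt j) else 0) - Wt p q := by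
    intro p q
    by_cases h : p = q
    · subst h
      rw [if_pos rfl]
      simp only [hLt, hDt, Matrix.sub_apply, Matrix.smul_apply, Matrix.one_apply_eq,
        Matrix.diagonal_apply_eq, smul_eq_mul]
      ring
    · rw [if_neg h]
      simp only [hLt, hDt, Matrix.sub_apply, Matrix.smul_apply, Matrix.one_apply_ne h,
        Matrix.diagonal_apply_ne _ h, smul_eq_mul]
      ring
  have hWaa : ∀ a : Fin N, W a a = 0 := by
    intro a
    rw [hW]
    simp
  have hWab : ∀ a b : Fin N, a ≠ b → β a = j → β b = j → W a b = w j := by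
    intro a b hab ha hb
    rw [hW, if_pos ⟨hab, ha.trans hb.symm⟩, ha]
  have hWc : ∀ c a b : Fin N, c ≠ a → c ≠ b → β a = j → β b = j → W c a = W c b := by
    intro c a b hca hcb ha hb
    rw [hW, hW]
    by_cases hc : β c = j
    · rw [if_pos ⟨hca, hc.trans ha.symm⟩, if_pos ⟨hcb, hc.trans hb.symm⟩]
    · rw [if_neg (fun h => hc (h.2.trans ha)), if_neg (fun h => hc (h.2.trans hb))]
  -- columns of the shifted Laplacian in the same block coincide
  have hcol : ∀ a b : Fin N, β a = j → β b = j → a ≠ b → ∀ p : Fin (N + 1),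
      (Lt - ((n j : ℝ) * w j + wt j) • (1 : Matrix (Fin (N + 1)) (Fin (N + 1)) ℝ)) p a.castSucc
      = (Lt - ((n j : ℝ) * w j + wt j) • (1 : Matrix (Fin (N + 1)) (Fin (N + 1)) ℝ)) p b.castSucc := by
    intro a b ha hb hab p
    rw [hM, hM]
    induction p using Fin.lastCases with
    | last =>
      have h1 : (Fin.last N) ≠ a.castSucc := (Fin.castSucc_lt_last a).ne'
      have h2 : (Fin.last N) ≠ b.castSucc := (Fin.castSucc_lt_last b).ne'
      rw [if_neg h1, if_neg h2, hWt2, hWt2, ha, hb]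
    | cast c =>
      by_cases hca : c = a
      · subst hca
        have h2 : c.castSucc ≠ b.castSucc := by
          rw [Ne, Fin.castSucc_inj]; exact hab
        rw [if_pos rfl, if_neg h2, hrow c ha, hWt1, hWt1, hWaa, hWab c b hab ha hb]
        ring
      · by_cases hcb : c = b
        · subst hcb
          have h1 : c.castSucc ≠ a.castSucc := by
            rw [Ne, Fin.castSucc_inj]; exact hca
          rw [if_neg h1, if_pos rfl, hrow c hb, hWt1, hWt1, hWaa,
            hWab c a (fun h => hca h) hb ha]
          ring
        · have h1 : c.castSucc ≠ a.castSucc := by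
            rw [Ne, Fin.castSucc_inj]; exact hca
          have h2 : c.castSucc ≠ b.castSucc := by
            rw [Ne, Fin.castSucc_inj]; exact hcb
          rw [if_neg h1, if_neg h2, hWt1, hWt1, hWc c a b hca hcb ha hb]
  -- kernel membership of difference vectors
  have hker : ∀ a b : Fin N, β a = j → β b = j → a ≠ b →
      (Pi.single a.castSucc (1 : ℝ) - Pi.single b.castSucc 1) ∈
        LinearMap.ker (Matrix.toLin'
          (Lt - ((n j : ℝ) * w j + wt j) • (1 : Matrix (Fin (N + 1)) (Fin (N + 1)) ℝ))) := by
    intro a b ha hb hab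
    rw [LinearMap.mem_ker, Matrix.toLin'_apply]
    funext p
    have hsub : (Lt - ((n j : ℝ) * w j + wt j) • (1 : Matrix (Fin (N + 1)) (Fin (N + 1)) ℝ)).mulVec
        (Pi.single a.castSucc (1 : ℝ) - Pi.single b.castSucc 1)
        = (Lt - ((n j : ℝ) * w j + wt j) • (1 : Matrix (Fin (N + 1)) (Fin (N + 1)) ℝ)).mulVec
            (Pi.single a.castSucc (1 : ℝ)) -
          (Lt - ((n j : ℝ) * w j + wt j) • (1 : Matrix (Fin (N + 1)) (Fin (N + 1)) ℝ)).mulVec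
            (Pi.single b.castSucc (1 : ℝ)) := by
      rw [Matrix.mulVec_sub]
    rw [hsub]
    simp only [Matrix.mulVec_single, Pi.sub_apply, Pi.zero_apply, mul_one, MulOpposite.op_one,
      one_smul, Matrix.col_apply]
    rw [hcol a b ha hb hab p]
    ring
  -- the block as a finset
  set T : Finset (Fin N) := Finset.univ.filter (fun m => β m = j) with hT
  obtain ⟨a0, ha0⟩ : T.Nonempty := Finset.card_pos.mp (by rw [hcard]; have := hn j; omega)
  have ha0j : β a0 = j := (Finset.mem_filter.mp ha0).2
  set T' : Finset (Fin N) := T.erase a0 with hT'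
  have hT'card : T'.card = n j - 1 := by
    rw [hT', Finset.card_erase_of_mem ha0, hcard]
  set v : {x // x ∈ T'} → (Fin (N + 1) → ℝ) :=
    fun a => Pi.single (a : Fin N).castSucc 1 - Pi.single a0.castSucc 1 with hv
  have hvmem : ∀ a : {x // x ∈ T'}, v a ∈
      LinearMap.ker (Matrix.toLin'
        (Lt - ((n j : ℝ) * w j + wt j) • (1 : Matrix (Fin (N + 1)) (Fin (N + 1)) ℝ))) := by
    intro a
    have hane : (a : Fin N) ≠ a0 := Finset.ne_of_mem_erase a.2
    have haT : (a : Fin N) ∈ T := Finset.mem_of_mem_erase a.2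
    exact hker _ _ ((Finset.mem_filter.mp haT).2) ha0j hane
  have hli : LinearIndependent ℝ v := by
    rw [Fintype.linearIndependent_iff]
    intro g hg a
    have hne : (a : Fin N).castSucc ≠ a0.castSucc := by
      rw [Ne, Fin.castSucc_inj]
      exact Finset.ne_of_mem_erase a.2
    have h1 := congrFun hg ((a : Fin N).castSucc)
    rw [Finset.sum_apply] at h1
    have h2 : ∀ b : {x // x ∈ T'}, (g b • v b) ((a : Fin N).castSucc)
        = if a = b then g b else 0 := by
      intro b
      simp only [hv, Pi.smul_apply, Pi.sub_apply, Pi.single_apply, smul_eq_mul,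
        if_neg hne]
      by_cases hab : a = b
      · subst hab
        simp
      · have hc : (a : Fin N).castSucc ≠ (b : Fin N).castSucc := by
          rw [Ne, Fin.castSucc_inj]
          exact fun h => hab (Subtype.ext h)
        simp [hc, hab]
    rw [Finset.sum_congr rfl (fun b _ => h2 b), Finset.sum_ite_eq] at h1
    simpa using h1
  set v' : {x // x ∈ T'} → ↥(LinearMap.ker (Matrix.toLin'
      (Lt - ((n j : ℝ) * w j + wt j) • (1 : Matrix (Fin (N + 1)) (Fin (N + 1)) ℝ)))) :=
    fun a => ⟨v a, hvmem a⟩ with hv'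
  have hli' : LinearIndependent ℝ v' := by
    apply LinearIndependent.of_comp (Submodule.subtype _)
    exact hli
  calc n j - 1 = Fintype.card {x // x ∈ T'} := by rw [Fintype.card_coe, hT'card]
    _ ≤ _ := hli'.fintype_card_le_finrank
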